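/- For all vectors z_1,…,z_8, w ∈ ℂ^4 the following polynomial identity holds: A·⟨127w⟩² − B·⟨127w⟩·⟨128w⟩ + C·⟨128w⟩² = ⟨1278⟩·det[(12w*34), z_6, z_5, (78*12w)], where ⟨127w⟩ := det[z_1 z_2 z_7 w], ⟨128w⟩ := det[z_1 z_2 z_8 w], and (12w*34) and (78*12w) are the shuffle vectors associated with the tuples ((z_1,z_2,w),(z_3,z_4)) and ((z_7,z_8),(z_1,z_2,w)) respectively. -/

import Mathlib

noncomputable section

/-- `⟨u₁ u₂ u₃ u₄⟩ = det[u₁ u₂ u₃ u₄]`: the determinant of the `4 × 4` complex matrix with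
columns `u₁, u₂, u₃, u₄` in the listed order. -/
def det4 (a b c d : Fin 4 → ℂ) : ℂ :=
  Matrix.det (Matrix.of fun i j => ![a, b, c, d] j i)

/-- The chain polynomial `⟨X * Y * U⟩` for blocks `X = (x₁,x₂,x₃)`, `Y = (y₁,y₂)`,
`U = (u₁,u₂,u₃)` of sizes `(3,2,3)`:
`Σ_{w ∈ S₂¹} sign(w)·det[x₁ x₂ x₃ y_{w(2)}]·det[y_{w(1)} u₁ u₂ u₃]`. -/
def chain323 (x1 x2 x3 y1 y2 u1 u2 u3 : Fin 4 → ℂ) : ℂ :=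
  det4 x1 x2 x3 y2 * det4 y1 u1 u2 u3 - det4 x1 x2 x3 y1 * det4 y2 u1 u2 u3

/-- The shuffle vector `(X * Y) ∈ ℂ⁴` for tuples `X = (x₁,x₂,x₃)`, `Y = (y₁,y₂)`
(`p + q = 5`): `Σ_j (−1)^{j−1}·det[x₁ x₂ x₃ y₁ ⋯ ŷ_j ⋯ y₂]·y_j`. -/
def shuf32 (x1 x2 x3 y1 y2 : Fin 4 → ℂ) : Fin 4 → ℂ :=
  det4 x1 x2 x3 y2 • y1 - det4 x1 x2 x3 y1 • y2

/-- The shuffle vector `(X * Y) ∈ ℂ⁴` for tuples `X = (x₁,x₂)`, `Y = (y₁,y₂,y₃)`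
(`p + q = 5`): `Σ_j (−1)^{j−1}·det[x₁ x₂ y₁ ⋯ ŷ_j ⋯ y₃]·y_j`. -/
def shuf23 (x1 x2 y1 y2 y3 : Fin 4 → ℂ) : Fin 4 → ℂ :=
  det4 x1 x2 y2 y3 • y1 - det4 x1 x2 y1 y3 • y2 + det4 x1 x2 y1 y2 • y3

/-- `A := Y₈₈` where `Y_{ij} := ⟨12i * 43 * 56j⟩`. -/
def Aco (z1 z2 z3 z4 z5 z6 z7 z8 : Fin 4 → ℂ) : ℂ :=
  chain323 z1 z2 z8 z4 z3 z5 z6 z8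

/-- `B := Y₇₈ + Y₈₇` where `Y_{ij} := ⟨12i * 43 * 56j⟩`. -/
def Bco (z1 z2 z3 z4 z5 z6 z7 z8 : Fin 4 → ℂ) : ℂ :=
  chain323 z1 z2 z7 z4 z3 z5 z6 z8 + chain323 z1 z2 z8 z4 z3 z5 z6 z7

/-- `C := Y₇₇` where `Y_{ij} := ⟨12i * 43 * 56j⟩`. -/
def Cco (z1 z2 z3 z4 z5 z6 z7 z8 : Fin 4 → ℂ) : ℂ :=
  chain323 z1 z2 z7 z4 z3 z5 z6 z7

/-- Explicit cofactor expansion of `det4`. -/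
lemma det4_eq (a b c d : Fin 4 → ℂ) :
    det4 a b c d =
      a 0 * (b 1 * (c 2 * d 3 - c 3 * d 2) - b 2 * (c 1 * d 3 - c 3 * d 1)
          + b 3 * (c 1 * d 2 - c 2 * d 1))
      - a 1 * (b 0 * (c 2 * d 3 - c 3 * d 2) - b 2 * (c 0 * d 3 - c 3 * d 0)
          + b 3 * (c 0 * d 2 - c 2 * d 0))
      + a 2 * (b 0 * (c 1 * d 3 - c 3 * d 1) - b 1 * (c 0 * d 3 - c 3 * d 0)
          + b 3 * (c 0 * d 1 - c 1 * d 0))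
      - a 3 * (b 0 * (c 1 * d 2 - c 2 * d 1) - b 1 * (c 0 * d 2 - c 2 * d 0)
          + b 2 * (c 0 * d 1 - c 1 * d 0)) := by
  simp [det4, Matrix.det_succ_row_zero, Fin.sum_univ_succ, Fin.succAbove,
    Matrix.det_fin_three, show (Fin.succ 2 : Fin 4) = 3 from rfl,
    show ((2 : Fin 3).castSucc : Fin 4) = 2 from rfl]
  ring

/-- Three-term Grassmann–Plücker relation. -/
lemma gp3 (a b c d v u : Fin 4 → ℂ) :
    det4 a b d v * det4 a b c u - det4 a b c v * det4 a b d u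
      = det4 a b c d * det4 a b u v := by
  simp only [det4_eq]; ring

/-- Five-term Grassmann–Plücker relation, in the form needed below. -/
lemma gp5 (z1 z2 z5 z6 z7 z8 v w : Fin 4 → ℂ) :
    det4 z7 z8 z2 w * det4 v z6 z5 z1 - det4 z7 z8 z1 w * det4 v z6 z5 z2
        + det4 z7 z8 z1 z2 * det4 v z6 z5 w
      = det4 v z5 z6 z7 * det4 z1 z2 z8 w - det4 v z5 z6 z8 * det4 z1 z2 z7 w := by
  simp only [det4_eq]; ring

/-- Multilinearity of `det4` in the first and fourth columns. -/
lemma det4_expand (a b p q r : ℂ) (x y c d u1 u2 u3 : Fin 4 → ℂ) :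
    det4 (a • x - b • y) c d (p • u1 - q • u2 + r • u3)
      = a * p * det4 x c d u1 - a * q * det4 x c d u2 + a * r * det4 x c d u3
        - b * p * det4 y c d u1 + b * q * det4 y c d u2 - b * r * det4 y c d u3 := by
  simp only [det4_eq, Pi.add_apply, Pi.sub_apply, Pi.smul_apply, smul_eq_mul]
  ring

/-- For all vectors `z₁, …, z₈, w ∈ ℂ⁴`:
`A·⟨127w⟩² − B·⟨127w⟩·⟨128w⟩ + C·⟨128w⟩² = ⟨1278⟩·det[(12w*34), z₆, z₅, (78*12w)]`. -/
theorem identity_quadratic_in_127w_128w (z1 z2 z3 z4 z5 z6 z7 z8 w : Fin 4 → ℂ) :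
    Aco z1 z2 z3 z4 z5 z6 z7 z8 * det4 z1 z2 z7 w ^ 2
      - Bco z1 z2 z3 z4 z5 z6 z7 z8 * det4 z1 z2 z7 w * det4 z1 z2 z8 w
      + Cco z1 z2 z3 z4 z5 z6 z7 z8 * det4 z1 z2 z8 w ^ 2
    = det4 z1 z2 z7 z8 * det4 (shuf32 z1 z2 w z3 z4) z6 z5 (shuf23 z7 z8 z1 z2 w) := by
  unfold Aco Bco Cco chain323 shuf32 shuf23
  rw [det4_expand]
  linear_combination
    (det4 z4 z5 z6 z8 * det4 z1 z2 z7 w - det4 z4 z5 z6 z7 * det4 z1 z2 z8 w) *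
        gp3 z1 z2 z7 z8 z3 w
      - (det4 z3 z5 z6 z8 * det4 z1 z2 z7 w - det4 z3 z5 z6 z7 * det4 z1 z2 z8 w) *
        gp3 z1 z2 z7 z8 z4 w
      - det4 z1 z2 z7 z8 * det4 z1 z2 w z4 * gp5 z1 z2 z5 z6 z7 z8 z3 w
      + det4 z1 z2 z7 z8 * det4 z1 z2 w z3 * gp5 z1 z2 z5 z6 z7 z8 z4 w

end
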